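/- Let $D \ge 1$, $\delta > 0$, $a \le b \le 0$, $\varepsilon \ge 0$, $\gamma \in \mathbb{R}$ with $\varepsilon - \gamma < -1$. Set $a_{m,n} = D(m-n+1)^a(|n|+1)^{\varepsilon}$ for $m \ge n$, $b_{m,n} = D(n-m+1)^b(|n|+1)^{\varepsilon}$ for $m \le n$, and $\|B_k\| := \delta(|k+1|+1)^{-\gamma}$. Then for all integers $m \ge n$, $\sum_{k=-\infty}^{n-1} a_{m,k+1}\|B_k\| b_{k,n} + \sum_{k=n}^{m-1} a_{m,k+1}\|B_k\| a_{k,n} + \sum_{k=m}^{\infty} b_{m,k+1}\|B_k\| a_{k,n} \le 2^{-a} D^2 \delta (m-n+1)^a (|n|+1)^{\varepsilon} (2\zeta_{\gamma-\varepsilon}-1)$, where $\zeta_{\gamma-\varepsilon} = \sum_{k=1}^{\infty} k^{\varepsilon-\gamma}$. -/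

import Mathlib

open Real

lemma aux_two_rpow {a : ℝ} (ha : a ≤ 0) : (1:ℝ) ≤ (2:ℝ) ^ (-a) := by
  have := Real.rpow_le_rpow_of_exponent_le (by norm_num : (1:ℝ) ≤ 2)
    (by linarith : (0:ℝ) ≤ -a)
  simpa using this

lemma aux_prod_rpow {a x y s : ℝ} (ha : a ≤ 0) (hx : 1 ≤ x) (hy : 1 ≤ y)
    (hs : x + y = s) : x ^ a * y ^ a ≤ 2 ^ (-a) * s ^ a := by
  have hx0 : (0:ℝ) < x := by linarith
  have hy0 : (0:ℝ) < y := by linarith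
  have hs2 : (0:ℝ) < s / 2 := by nlinarith
  have hle : s / 2 ≤ x * y := by nlinarith [(x - 1) * (y - 1)]
  have h1 : (x * y) ^ a ≤ (s / 2) ^ a :=
    Real.rpow_le_rpow_of_nonpos hs2 hle ha
  have h2 : x ^ a * y ^ a = (x * y) ^ a := (Real.mul_rpow hx0.le hy0.le).symm
  have h3 : (s / 2) ^ a = 2 ^ (-a) * s ^ a := by
    rw [Real.div_rpow (by nlinarith) (by norm_num), Real.rpow_neg (by norm_num)]
    ring
  rw [h2, ← h3]; exact h1

/-- Summation estimate for `λ_{m,n}` in the robustness of nonuniform polynomial dichotomies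
on `ℤ`, with bounds `a_{m,n} = D(m-n+1)^a(|n|+1)^ε`, `b_{m,n} = D(n-m+1)^b(|n|+1)^ε` and
perturbations `‖B_k‖ = δ(|k+1|+1)^{-γ}`. -/
theorem stmt_3 (D δ a b γ ε : ℝ) (hD : 1 ≤ D) (hδ : 0 < δ) (hab : a ≤ b) (hb : b ≤ 0)
    (hε : 0 ≤ ε) (heg : ε - γ < -1)
    (A : ℤ → ℤ → ℝ) (hA : ∀ m n : ℤ, n ≤ m → A m n = D * ((m : ℝ) - n + 1) ^ a * (|(n : ℝ)| + 1) ^ ε)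
    (Bd : ℤ → ℤ → ℝ) (hB : ∀ m n : ℤ, m ≤ n → Bd m n = D * ((n : ℝ) - m + 1) ^ b * (|(n : ℝ)| + 1) ^ ε)
    (P : ℤ → ℝ) (hP : ∀ k : ℤ, P k = δ * (|(k : ℝ) + 1| + 1) ^ (-γ))
    (m n : ℤ) (hmn : n ≤ m) :
    (∑' k : {k : ℤ // k < n}, A m ((k : ℤ) + 1) * P k * Bd k n)
      + (∑ k ∈ Finset.Ico n m, A m (k + 1) * P k * A k n)
      + (∑' k : {k : ℤ // m ≤ k}, Bd m ((k : ℤ) + 1) * P k * A k n)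
      ≤ (2 : ℝ) ^ (-a) * D ^ 2 * δ * ((m : ℝ) - n + 1) ^ a * (|(n : ℝ)| + 1) ^ ε *
          (2 * (∑' k : ℕ, ((k : ℝ) + 1) ^ (ε - γ)) - 1) := by
  have hD0 : (0:ℝ) < D := lt_of_lt_of_le one_pos hD
  have ha0 : a ≤ 0 := hab.trans hb
  have hmnR : (n:ℝ) ≤ (m:ℝ) := by exact_mod_cast hmn
  have hs1 : (1:ℝ) ≤ (m:ℝ) - n + 1 := by linarith
  have hs0 : (0:ℝ) < (m:ℝ) - n + 1 := by linarith
  set p := ε - γ with hp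
  have hp0 : p ≤ 0 := by rw [hp]; linarith
  set g : ℤ → ℝ := fun k => (|(k:ℝ) + 1| + 1) ^ p with hg
  have hu1 : ∀ k : ℤ, (1:ℝ) ≤ |(k:ℝ) + 1| + 1 := fun k => by
    have := abs_nonneg ((k:ℝ) + 1); linarith
  have hu0 : ∀ k : ℤ, (0:ℝ) < |(k:ℝ) + 1| + 1 := fun k => by positivity
  have hg0 : ∀ k : ℤ, 0 ≤ g k := fun k => Real.rpow_nonneg (hu0 k).le p
  -- summability of the basic nat series
  have hζ : Summable (fun k : ℕ => ((k:ℝ) + 1) ^ p) := by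
    have h1 : Summable (fun k : ℕ => ((k:ℝ)) ^ p) := Real.summable_nat_rpow.mpr heg
    have h2 := (summable_nat_add_iff 1).mpr h1
    refine h2.congr fun k => ?_
    push_cast
    ring_nf
  -- summability and value of g over ℤ
  have hkey : ∀ k : ℕ, g (-((k:ℤ)+1)) = ((k:ℝ) + 1) ^ p := by
    intro k
    simp only [hg]
    have : ((-((k:ℤ)+1) : ℤ) : ℝ) + 1 = -(k:ℝ) := by push_cast; ring
    rw [this, abs_neg, abs_of_nonneg (by positivity : (0:ℝ) ≤ (k:ℝ))]
  have hgnat : Summable (fun k : ℕ => g (k:ℤ)) := by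
    refine Summable.of_nonneg_of_le (fun k => hg0 _) (fun k => ?_) hζ
    simp only [hg]
    have h1 : |((k:ℤ):ℝ) + 1| + 1 = (k:ℝ) + 2 := by
      rw [abs_of_nonneg (by positivity)]; push_cast; ring
    rw [h1]
    exact Real.rpow_le_rpow_of_nonpos (by positivity) (by linarith) hp0
  have hgneg : Summable (fun k : ℕ => g (-((k:ℤ)+1))) := hζ.congr fun k => (hkey k).symm
  have hgsum : Summable g := Summable.of_nat_of_neg_add_one hgnat hgneg
  have hgval : ∑' k : ℤ, g k = 2 * (∑' k : ℕ, ((k : ℝ) + 1) ^ p) - 1 := by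
    rw [tsum_of_nat_of_neg_add_one hgnat hgneg]
    have e2 : ∑' k : ℕ, g (-((k:ℤ)+1)) = ∑' k : ℕ, ((k:ℝ) + 1) ^ p := tsum_congr hkey
    have e1 : (∑' k : ℕ, ((k:ℝ) + 1) ^ p) = 1 + ∑' k : ℕ, g (k:ℤ) := by
      rw [Summable.tsum_eq_zero_add hζ]
      congr 1
      · norm_num
      · refine tsum_congr fun k => ?_
        simp only [hg]
        have : |((k:ℤ):ℝ) + 1| + 1 = ((k:ℝ) + 1) + 1 := by
          rw [abs_of_nonneg (by positivity)]
          push_cast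
          ring
        rw [this]
        push_cast
        ring_nf
    rw [e2]
    linarith
  -- the constant
  set K := (2:ℝ) ^ (-a) * D ^ 2 * δ * ((m : ℝ) - n + 1) ^ a * (|(n : ℝ)| + 1) ^ ε with hK
  have hK0 : 0 ≤ K := by
    rw [hK]
    have := Real.rpow_nonneg hs0.le a
    positivity
  set h : ℤ → ℝ := fun k => K * g k with hh
  have hhsum : Summable h := hgsum.mul_left K
  -- the common factor
  have hC0 : ∀ k : ℤ, (0:ℝ) ≤ D^2 * δ * (|(n:ℝ)|+1)^ε * (|(k:ℝ)+1|+1) ^ p := by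
    intro k
    have := Real.rpow_nonneg (hu0 k).le p
    positivity
  -- merge the ε and -γ powers of |k+1|+1
  have hmerge : ∀ k : ℤ, (|(k:ℝ)+1|+1) ^ ε * (|(k:ℝ)+1|+1) ^ (-γ) = (|(k:ℝ)+1|+1) ^ p := by
    intro k
    rw [← Real.rpow_add (hu0 k), hp]
    ring_nf
  -- bounds for the three regimes
  have hbound1 : ∀ k : ℤ, k < n → A m (k+1) * P k * Bd k n ≤ h k := by
    intro k hk
    rw [hA m (k+1) (by omega), hP k, hB k n (by omega)]
    push_cast
    have hx : (m:ℝ) - n + 1 ≤ (m:ℝ) - ((k:ℝ)+1) + 1 := by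
      have : (k:ℝ) + 1 ≤ (n:ℝ) := by exact_mod_cast (by omega : k + 1 ≤ n)
      linarith
    have hy : (1:ℝ) ≤ (n:ℝ) - k + 1 := by
      have : (k:ℝ) ≤ (n:ℝ) := by exact_mod_cast hk.le
      linarith
    have hX : ((m:ℝ) - ((k:ℝ)+1) + 1) ^ a * ((n:ℝ) - k + 1) ^ b
        ≤ 2 ^ (-a) * ((m:ℝ) - n + 1) ^ a := by
      have h1 : ((m:ℝ) - ((k:ℝ)+1) + 1) ^ a ≤ ((m:ℝ) - n + 1) ^ a :=
        Real.rpow_le_rpow_of_nonpos hs0 hx ha0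
      have h2 : ((n:ℝ) - k + 1) ^ b ≤ 1 := Real.rpow_le_one_of_one_le_of_nonpos hy hb
      have h3 : (0:ℝ) ≤ ((m:ℝ) - ((k:ℝ)+1) + 1) ^ a := Real.rpow_nonneg (by linarith) a
      have h4 : ((m:ℝ) - n + 1) ^ a ≤ 2 ^ (-a) * ((m:ℝ) - n + 1) ^ a := by
        nlinarith [aux_two_rpow ha0, Real.rpow_nonneg hs0.le a]
      nlinarith
    calc D * ((m:ℝ) - ((k:ℝ)+1) + 1) ^ a * (|(k:ℝ)+1|+1) ^ ε * (δ * (|(k:ℝ)+1|+1) ^ (-γ)) *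
          (D * ((n:ℝ) - k + 1) ^ b * (|(n:ℝ)|+1) ^ ε)
        = (D^2 * δ * (|(n:ℝ)|+1)^ε * ((|(k:ℝ)+1|+1) ^ ε * (|(k:ℝ)+1|+1) ^ (-γ))) *
            (((m:ℝ) - ((k:ℝ)+1) + 1) ^ a * ((n:ℝ) - k + 1) ^ b) := by ring
      _ = (D^2 * δ * (|(n:ℝ)|+1)^ε * (|(k:ℝ)+1|+1) ^ p) *
            (((m:ℝ) - ((k:ℝ)+1) + 1) ^ a * ((n:ℝ) - k + 1) ^ b) := by rw [hmerge k]
      _ ≤ (D^2 * δ * (|(n:ℝ)|+1)^ε * (|(k:ℝ)+1|+1) ^ p) *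
            (2 ^ (-a) * ((m:ℝ) - n + 1) ^ a) := mul_le_mul_of_nonneg_left hX (hC0 k)
      _ = h k := by rw [hh, hK, hg]; ring
  have hbound2 : ∀ k : ℤ, n ≤ k → k < m → A m (k+1) * P k * A k n ≤ h k := by
    intro k hk1 hk2
    rw [hA m (k+1) (by omega), hP k, hA k n (by omega)]
    push_cast
    have hx : (1:ℝ) ≤ (m:ℝ) - ((k:ℝ)+1) + 1 := by
      have : (k:ℝ) + 1 ≤ (m:ℝ) := by exact_mod_cast (by omega : k + 1 ≤ m)
      linarith
    have hy : (1:ℝ) ≤ (k:ℝ) - n + 1 := by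
      have : (n:ℝ) ≤ (k:ℝ) := by exact_mod_cast hk1
      linarith
    have hX : ((m:ℝ) - ((k:ℝ)+1) + 1) ^ a * ((k:ℝ) - n + 1) ^ a
        ≤ 2 ^ (-a) * ((m:ℝ) - n + 1) ^ a :=
      aux_prod_rpow ha0 hx hy (by ring)
    calc D * ((m:ℝ) - ((k:ℝ)+1) + 1) ^ a * (|(k:ℝ)+1|+1) ^ ε * (δ * (|(k:ℝ)+1|+1) ^ (-γ)) *
          (D * ((k:ℝ) - n + 1) ^ a * (|(n:ℝ)|+1) ^ ε)
        = (D^2 * δ * (|(n:ℝ)|+1)^ε * ((|(k:ℝ)+1|+1) ^ ε * (|(k:ℝ)+1|+1) ^ (-γ))) *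
            (((m:ℝ) - ((k:ℝ)+1) + 1) ^ a * ((k:ℝ) - n + 1) ^ a) := by ring
      _ = (D^2 * δ * (|(n:ℝ)|+1)^ε * (|(k:ℝ)+1|+1) ^ p) *
            (((m:ℝ) - ((k:ℝ)+1) + 1) ^ a * ((k:ℝ) - n + 1) ^ a) := by rw [hmerge k]
      _ ≤ (D^2 * δ * (|(n:ℝ)|+1)^ε * (|(k:ℝ)+1|+1) ^ p) *
            (2 ^ (-a) * ((m:ℝ) - n + 1) ^ a) := mul_le_mul_of_nonneg_left hX (hC0 k)
      _ = h k := by rw [hh, hK, hg]; ring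
  have hbound3 : ∀ k : ℤ, m ≤ k → Bd m (k+1) * P k * A k n ≤ h k := by
    intro k hk
    rw [hB m (k+1) (by omega), hP k, hA k n (by omega)]
    push_cast
    have hx : (1:ℝ) ≤ ((k:ℝ)+1) - m + 1 := by
      have : (m:ℝ) ≤ (k:ℝ) := by exact_mod_cast hk
      linarith
    have hy : (m:ℝ) - n + 1 ≤ (k:ℝ) - n + 1 := by
      have : (m:ℝ) ≤ (k:ℝ) := by exact_mod_cast hk
      linarith
    have hX : (((k:ℝ)+1) - m + 1) ^ b * ((k:ℝ) - n + 1) ^ a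
        ≤ 2 ^ (-a) * ((m:ℝ) - n + 1) ^ a := by
      have h1 : ((k:ℝ) - n + 1) ^ a ≤ ((m:ℝ) - n + 1) ^ a :=
        Real.rpow_le_rpow_of_nonpos hs0 hy ha0
      have h2 : (((k:ℝ)+1) - m + 1) ^ b ≤ 1 := Real.rpow_le_one_of_one_le_of_nonpos hx hb
      have h3 : (0:ℝ) ≤ ((k:ℝ) - n + 1) ^ a := Real.rpow_nonneg (by linarith) a
      have h4 : ((m:ℝ) - n + 1) ^ a ≤ 2 ^ (-a) * ((m:ℝ) - n + 1) ^ a := by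
        nlinarith [aux_two_rpow ha0, Real.rpow_nonneg hs0.le a]
      nlinarith
    calc D * (((k:ℝ)+1) - m + 1) ^ b * (|(k:ℝ)+1|+1) ^ ε * (δ * (|(k:ℝ)+1|+1) ^ (-γ)) *
          (D * ((k:ℝ) - n + 1) ^ a * (|(n:ℝ)|+1) ^ ε)
        = (D^2 * δ * (|(n:ℝ)|+1)^ε * ((|(k:ℝ)+1|+1) ^ ε * (|(k:ℝ)+1|+1) ^ (-γ))) *
            ((((k:ℝ)+1) - m + 1) ^ b * ((k:ℝ) - n + 1) ^ a) := by ring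
      _ = (D^2 * δ * (|(n:ℝ)|+1)^ε * (|(k:ℝ)+1|+1) ^ p) *
            ((((k:ℝ)+1) - m + 1) ^ b * ((k:ℝ) - n + 1) ^ a) := by rw [hmerge k]
      _ ≤ (D^2 * δ * (|(n:ℝ)|+1)^ε * (|(k:ℝ)+1|+1) ^ p) *
            (2 ^ (-a) * ((m:ℝ) - n + 1) ^ a) := mul_le_mul_of_nonneg_left hX (hC0 k)
      _ = h k := by rw [hh, hK, hg]; ring
  -- nonnegativity of the three term functions
  have hpos1 : ∀ k : ℤ, k < n → 0 ≤ A m (k+1) * P k * Bd k n := by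
    intro k hk
    rw [hA m (k+1) (by omega), hP k, hB k n (by omega)]
    have hk1R : ((k+1:ℤ):ℝ) ≤ (n:ℝ) := by exact_mod_cast (by omega : k + 1 ≤ n)
    have h1 := Real.rpow_nonneg (by linarith : (0:ℝ) ≤ (m:ℝ) - ((k+1:ℤ):ℝ) + 1) a
    have h2 := Real.rpow_nonneg (by linarith [(by exact_mod_cast hk.le : (k:ℝ) ≤ (n:ℝ))] :
      (0:ℝ) ≤ (n:ℝ) - (k:ℝ) + 1) b
    have h3 := Real.rpow_nonneg (by positivity : (0:ℝ) ≤ |((k+1:ℤ):ℝ)| + 1) ε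
    have h4 := Real.rpow_nonneg (by positivity : (0:ℝ) ≤ |(n:ℝ)| + 1) ε
    have h5 := Real.rpow_nonneg (by positivity : (0:ℝ) ≤ |(k:ℝ) + 1| + 1) (-γ)
    positivity
  have hpos3 : ∀ k : ℤ, m ≤ k → 0 ≤ Bd m (k+1) * P k * A k n := by
    intro k hk
    rw [hB m (k+1) (by omega), hP k, hA k n (by omega)]
    have hkR : (m:ℝ) ≤ (k:ℝ) := by exact_mod_cast hk
    have h1 := Real.rpow_nonneg (by push_cast; linarith : (0:ℝ) ≤ (((k+1:ℤ)):ℝ) - (m:ℝ) + 1) b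
    have h2 := Real.rpow_nonneg (by linarith : (0:ℝ) ≤ (k:ℝ) - (n:ℝ) + 1) a
    have h3 := Real.rpow_nonneg (by positivity : (0:ℝ) ≤ |((k+1:ℤ):ℝ)| + 1) ε
    have h4 := Real.rpow_nonneg (by positivity : (0:ℝ) ≤ |(n:ℝ)| + 1) ε
    have h5 := Real.rpow_nonneg (by positivity : (0:ℝ) ≤ |(k:ℝ) + 1| + 1) (-γ)
    positivity
  -- the three sets
  have hsub1 : Summable ((h ∘ (↑)) : {k : ℤ | k < n} → ℝ) := hhsum.subtype _
  have hsub3 : Summable ((h ∘ (↑)) : {k : ℤ | m ≤ k} → ℝ) := hhsum.subtype _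
  -- bound each of the three sums
  have hT1 : (∑' k : {k : ℤ // k < n}, A m ((k : ℤ) + 1) * P k * Bd k n)
      ≤ ∑' k : {k : ℤ | k < n}, h k := by
    refine Summable.tsum_le_tsum (fun k => hbound1 k k.2) ?_ hsub1
    exact Summable.of_nonneg_of_le (fun k => hpos1 k k.2) (fun k => hbound1 k k.2) hsub1
  have hT2 : (∑ k ∈ Finset.Ico n m, A m (k + 1) * P k * A k n)
      ≤ ∑ k ∈ Finset.Ico n m, h k := by
    refine Finset.sum_le_sum fun k hk => ?_
    rw [Finset.mem_Ico] at hk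
    exact hbound2 k hk.1 hk.2
  have hT3 : (∑' k : {k : ℤ // m ≤ k}, Bd m ((k : ℤ) + 1) * P k * A k n)
      ≤ ∑' k : {k : ℤ | m ≤ k}, h k := by
    refine Summable.tsum_le_tsum (fun k => hbound3 k k.2) ?_ hsub3
    exact Summable.of_nonneg_of_le (fun k => hpos3 k k.2) (fun k => hbound3 k k.2) hsub3
  -- the decomposition of the full sum of h over ℤ
  have hdecomp : (∑' k : {k : ℤ | k < n}, h k) + (∑ k ∈ Finset.Ico n m, h k)
      + (∑' k : {k : ℤ | m ≤ k}, h k) = ∑' k : ℤ, h k := by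
    have hcompl : ({k : ℤ | k < n})ᶜ = Set.Ico n m ∪ {k : ℤ | m ≤ k} := by
      ext k
      simp only [Set.mem_compl_iff, Set.mem_setOf_eq, Set.mem_union, Set.mem_Ico, not_lt]
      omega
    have hdisj : Disjoint (Set.Ico n m) {k : ℤ | m ≤ k} := by
      rw [Set.disjoint_left]
      rintro k ⟨_, h2⟩ h3
      exact absurd h3 (not_le.mpr h2)
    have e1 := Summable.tsum_add_tsum_compl (f := h) (s := {k : ℤ | k < n})
      (hhsum.subtype _) (hhsum.subtype _)
    have e3 := Summable.tsum_union_disjoint (f := h) hdisj (hhsum.subtype _) (hhsum.subtype _)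
    have e4 : (∑' k : (Set.Ico n m : Set ℤ), h k) = ∑ k ∈ Finset.Ico n m, h k := by
      rw [← Finset.coe_Ico, Finset.tsum_subtype']
    rw [← e1, hcompl, e3, e4]
    ring
  have hfinal : (∑' k : ℤ, h k) = K * (2 * (∑' k : ℕ, ((k : ℝ) + 1) ^ p) - 1) := by
    rw [hh]
    rw [tsum_mul_left, hgval]
  calc (∑' k : {k : ℤ // k < n}, A m ((k : ℤ) + 1) * P k * Bd k n)
      + (∑ k ∈ Finset.Ico n m, A m (k + 1) * P k * A k n)
      + (∑' k : {k : ℤ // m ≤ k}, Bd m ((k : ℤ) + 1) * P k * A k n)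
      ≤ (∑' k : {k : ℤ | k < n}, h k) + (∑ k ∈ Finset.Ico n m, h k)
        + (∑' k : {k : ℤ | m ≤ k}, h k) := by
        gcongr
    _ = ∑' k : ℤ, h k := hdecomp
    _ = K * (2 * (∑' k : ℕ, ((k : ℝ) + 1) ^ p) - 1) := hfinal
    _ = (2 : ℝ) ^ (-a) * D ^ 2 * δ * ((m : ℝ) - n + 1) ^ a * (|(n : ℝ)| + 1) ^ ε *
          (2 * (∑' k : ℕ, ((k : ℝ) + 1) ^ (ε - γ)) - 1) := by rw [hK, hp]
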